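/- Let Da, λ₁, φ_f, a₁, a₂ be positive real constants, let α > 0 satisfy Da·(2 + λ₁ + φ_f²/a₁)·α² = 1, and let v(x) = cosh(α(1−x))/cosh(α). Define the pressure P : ℝ → ℝ by P(x) = (a₂ − φ_f·v'(x))/a₁. Then for all x ∈ [0,1] the pair (v, P) satisfies the reduced one-dimensional hydrodynamic system: −(2 + λ₁)·v''(x) + φ_f·P'(x) + v(x)/Da = 0 and φ_f·v'(x) + a₁·P(x) = a₂. -/

import Mathlib

/-- The pair `(v, P)` with `v(x) = cosh(α(1−x))/cosh(α)` and
`P(x) = (a₂ − φ_f·v'(x))/a₁` solves the reduced 1D hydrodynamic system: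
the fluid momentum balance and the fluid mass balance. -/
theorem stmt_8
    (Da lam1 phif a1 a2 : ℝ) (hDa : 0 < Da) (hlam1 : 0 < lam1)
    (hphif : 0 < phif) (ha1 : 0 < a1) (ha2 : 0 < a2)
    (α : ℝ) (hα : 0 < α)
    (hαeq : Da * (2 + lam1 + phif ^ 2 / a1) * α ^ 2 = 1) :
    let v : ℝ → ℝ := fun x => Real.cosh (α * (1 - x)) / Real.cosh α
    let P : ℝ → ℝ := fun x => (a2 - phif * deriv v x) / a1
    ∀ x ∈ Set.Icc (0 : ℝ) 1,
      -(2 + lam1) * deriv (deriv v) x + phif * deriv P x + v x / Da = 0 ∧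
      phif * deriv v x + a1 * P x = a2 := by
  intro v P
  have hc : Real.cosh α ≠ 0 := (Real.cosh_pos α).ne'
  have harg : ∀ x : ℝ, HasDerivAt (fun x => α * (1 - x)) (-α) x := by
    intro x
    simpa using (((hasDerivAt_id x).const_sub 1).const_mul α)
  have hv : deriv v = fun x => Real.sinh (α * (1 - x)) * (-α) / Real.cosh α := by
    funext x
    exact (((harg x).cosh).div_const (Real.cosh α)).deriv
  have hv2 : deriv (deriv v) = fun x => α ^ 2 * (Real.cosh (α * (1 - x)) / Real.cosh α) := by
    funext x
    rw [hv]
    have h1 : HasDerivAt (fun x => Real.sinh (α * (1 - x)) * (-α) / Real.cosh α)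
        (Real.cosh (α * (1 - x)) * (-α) * (-α) / Real.cosh α) x :=
      (((harg x).sinh).mul_const (-α)).div_const (Real.cosh α)
    rw [h1.deriv]; ring
  have hP : deriv P = fun x => -(phif / a1) * (α ^ 2 * (Real.cosh (α * (1 - x)) / Real.cosh α)) := by
    funext x
    have h1 : HasDerivAt (fun x => (a2 - phif * (Real.sinh (α * (1 - x)) * (-α) / Real.cosh α)) / a1)
        ((0 - phif * (Real.cosh (α * (1 - x)) * (-α) * (-α) / Real.cosh α)) / a1) x := by
      exact (((hasDerivAt_const x a2).sub
        (((((harg x).sinh).mul_const (-α)).div_const (Real.cosh α)).const_mul phif)).div_const a1)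
    have : P = fun x => (a2 - phif * (Real.sinh (α * (1 - x)) * (-α) / Real.cosh α)) / a1 := by
      funext y; simp only [P, hv]
    rw [this, h1.deriv]; ring
  intro x _
  constructor
  · rw [hv2, hP]
    simp only [v]
    field_simp at hαeq ⊢
    linear_combination (-(Real.cosh (α * (1 - x)))) * hαeq
  · simp only [P]
    field_simp
    ring
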